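/- Let f, g : ℝ_{>0}^n → ℝ be signomials. If there exist negative exponent vectors β₁ ∈ σ_-(f) and β₂ ∈ σ_-(g) such that Conv({β₁, β₂}) ∩ Conv(σ_+(f) ∪ σ_+(g)) = ∅, then f^{-1}(ℝ_{<0}) ∩ g^{-1}(ℝ_{<0}) ≠ ∅. -/

import Mathlib

open Finset

/-- The signomial `x ↦ ∑_{μ ∈ S} c μ * x^μ` (with real exponents, via `Real.rpow`). -/
noncomputable def sig {n : ℕ} (S : Finset (Fin n → ℝ)) (c : (Fin n → ℝ) → ℝ)
    (x : Fin n → ℝ) : ℝ :=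
  ∑ μ ∈ S, c μ * ∏ i, x i ^ μ i

open Classical in
/-- The restriction `f|_F` of the signomial to a subset `F ⊆ ℝⁿ` of exponent vectors. -/
noncomputable def sigOn {n : ℕ} (S : Finset (Fin n → ℝ)) (c : (Fin n → ℝ) → ℝ)
    (F : Set (Fin n → ℝ)) (x : Fin n → ℝ) : ℝ :=
  ∑ μ ∈ S, if μ ∈ F then c μ * ∏ i, x i ^ μ i else 0

/-- `f⁻¹(ℝ_{<0})`: the points of the positive orthant where the signomial is negative. -/
def negSet {n : ℕ} (S : Finset (Fin n → ℝ)) (c : (Fin n → ℝ) → ℝ) : Set (Fin n → ℝ) :=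
  {x | (∀ i, 0 < x i) ∧ sig S c x < 0}

/-- `(f|_F)⁻¹(ℝ_{<0})`. -/
def negSetOn {n : ℕ} (S : Finset (Fin n → ℝ)) (c : (Fin n → ℝ) → ℝ)
    (F : Set (Fin n → ℝ)) : Set (Fin n → ℝ) :=
  {x | (∀ i, 0 < x i) ∧ sigOn S c F x < 0}

/-- `σ₊(f)`: the positive exponent vectors. -/
def sigPos' {n : ℕ} (S : Finset (Fin n → ℝ)) (c : (Fin n → ℝ) → ℝ) : Set (Fin n → ℝ) :=
  {μ | μ ∈ S ∧ 0 < c μ}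

/-- `σ₋(f)`: the negative exponent vectors. -/
def sigNeg' {n : ℕ} (S : Finset (Fin n → ℝ)) (c : (Fin n → ℝ) → ℝ) : Set (Fin n → ℝ) :=
  {μ | μ ∈ S ∧ c μ < 0}

/-- The hyperplane `H_{v,a}`. -/
def Hyp {n : ℕ} (v : Fin n → ℝ) (a : ℝ) : Set (Fin n → ℝ) :=
  {μ | ∑ i, v i * μ i = a}

/-- The closed half-space `H⁺_{v,a}`. -/
def Hplus {n : ℕ} (v : Fin n → ℝ) (a : ℝ) : Set (Fin n → ℝ) :=
  {μ | a ≤ ∑ i, v i * μ i}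

/-- The closed half-space `H⁻_{v,a}`. -/
def Hminus {n : ℕ} (v : Fin n → ℝ) (a : ℝ) : Set (Fin n → ℝ) :=
  {μ | ∑ i, v i * μ i ≤ a}

/-- The open half-space `H^{+,∘}_{v,a}`. -/
def HplusO {n : ℕ} (v : Fin n → ℝ) (a : ℝ) : Set (Fin n → ℝ) :=
  {μ | a < ∑ i, v i * μ i}

/-- The open half-space `H^{-,∘}_{v,a}`. -/
def HminusO {n : ℕ} (v : Fin n → ℝ) (a : ℝ) : Set (Fin n → ℝ) :=
  {μ | ∑ i, v i * μ i < a}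

/-- `U` is a connected component of `X` (a maximal nonempty preconnected subset of `X`). -/
def IsConnComp {n : ℕ} (X U : Set (Fin n → ℝ)) : Prop :=
  U.Nonempty ∧ U ⊆ X ∧ IsPreconnected U ∧
    ∀ W, U ⊆ W → W ⊆ X → IsPreconnected W → W = U

/-- The number (cardinality) of connected components of `X`. -/
noncomputable def compCard {n : ℕ} (X : Set (Fin n → ℝ)) : Cardinal :=
  Cardinal.mk {U : Set (Fin n → ℝ) // IsConnComp X U}

/-- The face `N(f)_v` of the Newton polytope of a signomial with support `S`,
with outer normal vector `v`. -/
def faceOf {n : ℕ} (S : Finset (Fin n → ℝ)) (v : Fin n → ℝ) : Set (Fin n → ℝ) :=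
  {ω ∈ convexHull ℝ (↑S : Set (Fin n → ℝ)) |
    ∀ μ ∈ convexHull ℝ (↑S : Set (Fin n → ℝ)), ∑ i, v i * μ i ≤ ∑ i, v i * ω i}


lemma prod_exp_rpow {n : ℕ} (t : ℝ) (v μ : Fin n → ℝ) :
    (∏ i, Real.exp (t * v i) ^ μ i) = Real.exp (t * ∑ i, v i * μ i) := by
  simp_rw [← Real.exp_mul, ← Real.exp_sum, Finset.mul_sum]
  congr 1
  exact Finset.sum_congr rfl fun i _ => by ring

lemma aux_neg {n : ℕ} (S : Finset (Fin n → ℝ)) (c : (Fin n → ℝ) → ℝ) (v β : Fin n → ℝ) (u : ℝ)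
    (hβS : β ∈ S) (hβc : c β < 0)
    (hpos : ∀ μ ∈ S, 0 < c μ → ∑ i, v i * μ i ≤ u)
    (hu : u < ∑ i, v i * β i) :
    ∀ᶠ t in Filter.atTop, sig S c (fun i => Real.exp (t * v i)) < 0 := by
  set b := ∑ i, v i * β i with hb
  set C := ∑ μ ∈ S, max (c μ) 0 with hC
  have hexp : Filter.Tendsto (fun t : ℝ => Real.exp (t * (b - u))) Filter.atTop Filter.atTop :=
    Real.tendsto_exp_atTop.comp (Filter.Tendsto.atTop_mul_const (by linarith) Filter.tendsto_id)
  have hev : ∀ᶠ t in Filter.atTop, C / (-c β) < Real.exp (t * (b - u)) :=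
    hexp.eventually_gt_atTop _
  filter_upwards [hev, Filter.eventually_ge_atTop (0:ℝ)] with t ht ht0
  have hkey : C * Real.exp (t * u) < (-c β) * Real.exp (t * b) := by
    have h1 : C < (-c β) * Real.exp (t * (b - u)) := by
      rw [div_lt_iff₀ (by linarith)] at ht; linarith [ht]
    have h2 : C * Real.exp (t * u) < (-c β) * Real.exp (t * (b - u)) * Real.exp (t * u) :=
      (mul_lt_mul_of_pos_right h1 (Real.exp_pos _))
    calc C * Real.exp (t * u) < (-c β) * Real.exp (t * (b - u)) * Real.exp (t * u) := h2
      _ = (-c β) * Real.exp (t * b) := by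
          rw [mul_assoc, ← Real.exp_add]; ring_nf
  have hbound : sig S c (fun i => Real.exp (t * v i)) ≤ c β * Real.exp (t * b) + C * Real.exp (t * u) := by
    unfold sig
    simp_rw [prod_exp_rpow]
    rw [← Finset.add_sum_erase _ _ hβS]
    have hterm : ∀ μ ∈ S.erase β, c μ * Real.exp (t * ∑ i, v i * μ i) ≤ max (c μ) 0 * Real.exp (t * u) := by
      intro μ hμ
      rcases le_or_gt (c μ) 0 with h | h
      · exact le_trans (mul_nonpos_of_nonpos_of_nonneg h (Real.exp_pos _).le)
          (mul_nonneg (le_max_right _ _) (Real.exp_pos _).le)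
      · rw [max_eq_left h.le]
        exact mul_le_mul_of_nonneg_left
          (Real.exp_le_exp.2 (mul_le_mul_of_nonneg_left (hpos μ (Finset.mem_of_mem_erase hμ) h) ht0)) h.le
    have h3 : ∑ μ ∈ S.erase β, c μ * Real.exp (t * ∑ i, v i * μ i)
        ≤ ∑ μ ∈ S.erase β, max (c μ) 0 * Real.exp (t * u) := Finset.sum_le_sum hterm
    have h4 : ∑ μ ∈ S.erase β, max (c μ) 0 * Real.exp (t * u) ≤ C * Real.exp (t * u) := by
      rw [hC, ← Finset.sum_mul]
      exact mul_le_mul_of_nonneg_right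
        (Finset.sum_le_sum_of_subset_of_nonneg (Finset.erase_subset _ _)
          (fun _ _ _ => le_max_right _ _)) (Real.exp_pos _).le
    linarith
  linarith

/-- Proposition 2.12. -/
theorem stmt_8 (n : ℕ) (S₁ S₂ : Finset (Fin n → ℝ)) (c₁ c₂ : (Fin n → ℝ) → ℝ)
    (hc₁ : ∀ μ ∈ S₁, c₁ μ ≠ 0) (hc₂ : ∀ μ ∈ S₂, c₂ μ ≠ 0)
    (β₁ β₂ : Fin n → ℝ) (hβ₁ : β₁ ∈ sigNeg' S₁ c₁) (hβ₂ : β₂ ∈ sigNeg' S₂ c₂)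
    (hdisj : convexHull ℝ {β₁, β₂} ∩ convexHull ℝ (sigPos' S₁ c₁ ∪ sigPos' S₂ c₂) = ∅) :
    (negSet S₁ c₁ ∩ negSet S₂ c₂).Nonempty := by
  obtain ⟨hβ₁S, hβ₁c⟩ := hβ₁
  obtain ⟨hβ₂S, hβ₂c⟩ := hβ₂
  set P : Set (Fin n → ℝ) := sigPos' S₁ c₁ ∪ sigPos' S₂ c₂ with hP
  have hPfin : P.Finite := (S₁.finite_toSet.union S₂.finite_toSet).subset
    (by rintro μ (⟨h, _⟩ | ⟨h, _⟩) <;> simp [h])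
  have hBfin : ({β₁, β₂} : Set (Fin n → ℝ)).Finite :=
    (Set.finite_singleton β₂).insert β₁
  have hdisj' : Disjoint (convexHull ℝ P) (convexHull ℝ {β₁, β₂}) := by
    rw [Set.disjoint_iff_inter_eq_empty, Set.inter_comm]; exact hdisj
  obtain ⟨f, u, w, hfu, huw, hfw⟩ := geometric_hahn_banach_compact_closed
    (convex_convexHull ℝ P) (hPfin.isCompact_convexHull (𝕜 := ℝ))
    (convex_convexHull ℝ _) (hBfin.isCompact_convexHull (𝕜 := ℝ)).isClosed hdisj'
  set v : Fin n → ℝ := fun i => f (fun j => if i = j then 1 else 0) with hv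
  have hfv : ∀ μ, ∑ i, v i * μ i = f μ := by
    intro μ
    rw [show f μ = (f : (Fin n → ℝ) →ₗ[ℝ] ℝ) μ from rfl,
      LinearMap.pi_apply_eq_sum_univ (f : (Fin n → ℝ) →ₗ[ℝ] ℝ) μ]
    exact Finset.sum_congr rfl fun i _ => by simp [hv, mul_comm]
  have hβ₁f : u < ∑ i, v i * β₁ i := by
    rw [hfv]
    exact huw.trans (hfw _ (subset_convexHull ℝ _ (by simp)))
  have hβ₂f : u < ∑ i, v i * β₂ i := by
    rw [hfv]
    exact huw.trans (hfw _ (subset_convexHull ℝ _ (by simp)))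
  have hpos₁ : ∀ μ ∈ S₁, 0 < c₁ μ → ∑ i, v i * μ i ≤ u := fun μ hμ hc => by
    rw [hfv]
    exact (hfu _ (subset_convexHull ℝ P (Or.inl ⟨hμ, hc⟩))).le
  have hpos₂ : ∀ μ ∈ S₂, 0 < c₂ μ → ∑ i, v i * μ i ≤ u := fun μ hμ hc => by
    rw [hfv]
    exact (hfu _ (subset_convexHull ℝ P (Or.inr ⟨hμ, hc⟩))).le
  obtain ⟨t, h1, h2⟩ := ((aux_neg S₁ c₁ v β₁ u hβ₁S hβ₁c hpos₁ hβ₁f).and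
    (aux_neg S₂ c₂ v β₂ u hβ₂S hβ₂c hpos₂ hβ₂f)).exists
  exact ⟨fun i => Real.exp (t * v i), ⟨fun i => Real.exp_pos _, h1⟩,
    ⟨fun i => Real.exp_pos _, h2⟩⟩
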